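/- Let P be a path and C a cycle in a graph G such that P and C share at least one vertex. Then the number of chords of P relative to C equals the number of connected components of the intersection graph P ∩ C minus one. -/

import Mathlib

open SimpleGraph

namespace StmtAux
variable {V : Type*} {G : SimpleGraph V}

lemma support_getElem {u v : V} (w : G.Walk u v) : ∀ (i : ℕ) (h : i < w.support.length),
    w.support[i] = w.getVert i := by
  induction w with
  | nil =>
    intro i h
    simp only [SimpleGraph.Walk.support_nil, List.length_singleton] at h
    interval_cases i
    simp [SimpleGraph.Walk.getVert]
  | cons hadj q ih =>
    intro i h
    cases i with
    | zero => simp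
    | succ i =>
      simp only [SimpleGraph.Walk.support_cons, List.getElem_cons_succ,
        SimpleGraph.Walk.getVert_cons_succ]
      exact ih i (by simpa [SimpleGraph.Walk.support_cons] using h)

lemma getVert_mem_edges {u v : V} (w : G.Walk u v) : ∀ {i : ℕ}, i < w.length →
    s(w.getVert i, w.getVert (i+1)) ∈ w.edges := by
  induction w with
  | nil => intro i h; simp at h
  | cons hadj q ih =>
    intro i h
    cases i with
    | zero => simp
    | succ i =>
      simp only [SimpleGraph.Walk.getVert_cons_succ, SimpleGraph.Walk.edges_cons,
        List.mem_cons]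
      exact Or.inr (ih (by simpa using h))

lemma mem_edges_getVert {u v : V} (w : G.Walk u v) : ∀ {e : Sym2 V}, e ∈ w.edges →
    ∃ i < w.length, s(w.getVert i, w.getVert (i+1)) = e := by
  induction w with
  | nil => intro e h; simp at h
  | cons hadj q ih =>
    intro e h
    simp only [SimpleGraph.Walk.edges_cons, List.mem_cons] at h
    rcases h with h | h
    · exact ⟨0, by simp, by simp [h.symm]⟩
    · obtain ⟨i, hi, he⟩ := ih h
      exact ⟨i+1, by simpa using hi, by simpa using he⟩

lemma edges_getElem {u v : V} (w : G.Walk u v) : ∀ (i : ℕ) (h : i < w.edges.length),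
    w.edges[i] = s(w.getVert i, w.getVert (i+1)) := by
  induction w with
  | nil => intro i h; simp at h
  | cons hadj q ih =>
    intro i h
    cases i with
    | zero => simp
    | succ i =>
      simp only [SimpleGraph.Walk.edges_cons, List.getElem_cons_succ,
        SimpleGraph.Walk.getVert_cons_succ]
      exact ih i (by simpa using h)

end StmtAux

namespace StmtAux
variable {V : Type*} {G : SimpleGraph V}

/-- Take the first `n` darts of a walk. -/
def wtake {u v : V} : (w : G.Walk u v) → (n : ℕ) → G.Walk u (w.getVert n)
  | .nil, _ => .nil
  | .cons _ _, 0 => .nil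
  | .cons h q, n+1 => .cons h (wtake q n)

lemma support_wtake {u v : V} : ∀ (w : G.Walk u v) (n : ℕ),
    (wtake w n).support = w.support.take (n+1)
  | .nil, _ => by simp [wtake]
  | .cons h q, 0 => by simp [wtake]; rfl
  | .cons h q, n+1 => by
    simp [wtake, SimpleGraph.Walk.support_cons, support_wtake q n]

lemma edges_wtake {u v : V} : ∀ (w : G.Walk u v) (n : ℕ),
    (wtake w n).edges = w.edges.take n
  | .nil, _ => by simp [wtake]
  | .cons h q, 0 => by simp [wtake]; rfl
  | .cons h q, n+1 => by
    simp [wtake, SimpleGraph.Walk.edges_cons, edges_wtake q n]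

lemma length_wtake {u v : V} : ∀ (w : G.Walk u v) (n : ℕ),
    (wtake w n).length = min n w.length
  | .nil, _ => by simp [wtake]
  | .cons h q, 0 => by simp [wtake]; rfl
  | .cons h q, n+1 => by
    simp [wtake, length_wtake q n, Nat.succ_min_succ]

lemma getVert_drop {u v : V} : ∀ (w : G.Walk u v) (n i : ℕ),
    (w.drop n).getVert i = w.getVert (n + i)
  | .nil, _, _ => by simp [SimpleGraph.Walk.drop, SimpleGraph.Walk.getVert]
  | .cons h q, 0, i => by simp [SimpleGraph.Walk.drop]
  | .cons h q, n+1, i => by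
    simp only [SimpleGraph.Walk.drop, SimpleGraph.Walk.getVert_copy,
      SimpleGraph.Walk.getVert_cons_succ]
    rw [getVert_drop q n i, show n + 1 + i = (n + i) + 1 from by omega,
      SimpleGraph.Walk.getVert_cons_succ]

lemma support_drop {u v : V} : ∀ (w : G.Walk u v) (n : ℕ), n ≤ w.length →
    (w.drop n).support = w.support.drop n
  | .nil, _, h => by
    simp only [SimpleGraph.Walk.length_nil, Nat.le_zero] at h
    simp [SimpleGraph.Walk.drop, h]
  | .cons h q, 0, _ => by simp [SimpleGraph.Walk.drop]
  | .cons h q, n+1, hn => by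
    simp only [SimpleGraph.Walk.drop, SimpleGraph.Walk.support_copy,
      SimpleGraph.Walk.support_cons, List.drop_succ_cons]
    exact support_drop q n (by simpa using hn)

lemma edges_drop {u v : V} : ∀ (w : G.Walk u v) (n : ℕ), n ≤ w.length →
    (w.drop n).edges = w.edges.drop n
  | .nil, _, h => by
    simp only [SimpleGraph.Walk.length_nil, Nat.le_zero] at h
    simp [SimpleGraph.Walk.drop, h]
  | .cons h q, 0, _ => by simp [SimpleGraph.Walk.drop]
  | .cons h q, n+1, hn => by
    simp only [SimpleGraph.Walk.drop, SimpleGraph.Walk.edges_copy,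
      SimpleGraph.Walk.edges_cons, List.drop_succ_cons]
    exact edges_drop q n (by simpa using hn)

lemma length_drop' {u v : V} : ∀ (w : G.Walk u v) (n : ℕ),
    (w.drop n).length = w.length - n
  | .nil, _ => by simp [SimpleGraph.Walk.drop]
  | .cons h q, 0 => by simp [SimpleGraph.Walk.drop]
  | .cons h q, n+1 => by
    simp only [SimpleGraph.Walk.drop, SimpleGraph.Walk.length_copy,
      SimpleGraph.Walk.length_cons]
    exact (length_drop' q n).trans (by omega)

end StmtAux

open StmtAux in
theorem stmt_4 {V : Type*} [Fintype V] [DecidableEq V]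
    (G : SimpleGraph V) (a b u : V)
    (p : G.Walk a b) (hp : p.IsPath)
    (c : G.Walk u u) (hc : c.IsCycle)
    (hshare : ∃ x, x ∈ p.support ∧ x ∈ c.support) :
    Set.ncard {r : List V |
        ∃ (x y : V) (R : G.Walk x y), R.IsPath ∧ 0 < R.length ∧
          R.support.IsInfix p.support ∧
          x ∈ c.support ∧ y ∈ c.support ∧
          (∀ v ∈ R.support, v ≠ x → v ≠ y → v ∉ c.support) ∧
          (∀ e ∈ R.edges, e ∉ c.edges) ∧
          r = R.support} =
      Nat.card ((p.toSubgraph ⊓ c.toSubgraph).coe.ConnectedComponent) - 1 := by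
  classical
  set n := p.length with hn
  set f : ℕ → V := fun i => p.getVert i with hf
  set Cv : ℕ → Prop := fun i => f i ∈ c.support with hCv
  set Ce : ℕ → Prop := fun i => s(f i, f (i+1)) ∈ c.edges with hCe
  set St : ℕ → Prop := fun j => ¬(0 < j ∧ Ce (j-1)) with hSt
  set RS : Finset ℕ := (Finset.range (n+1)).filter (fun j => Cv j ∧ St j) with hRS
  have hsuplen : p.support.length = n + 1 := by
    rw [SimpleGraph.Walk.length_support]
  -- injectivity of f on [0, n]
  have hfinj : ∀ {i j : ℕ}, i ≤ n → j ≤ n → f i = f j → i = j := by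
    intro i j hi hj hij
    have h1 : p.support[i]'(by omega) = p.support[j]'(by omega) := by
      rw [support_getElem p i (by omega), support_getElem p j (by omega)]; exact hij
    exact (List.Nodup.getElem_inj_iff hp.support_nodup).mp h1
  have hmemf : ∀ i ≤ n, f i ∈ p.support := by
    intro i hi
    rw [SimpleGraph.Walk.mem_support_iff_exists_getVert]
    exact ⟨i, rfl, hi⟩
  have hCeCv : ∀ {k : ℕ}, Ce k → Cv k ∧ Cv (k+1) := by
    intro k hk
    exact ⟨c.fst_mem_support_of_mem_edges hk, c.snd_mem_support_of_mem_edges hk⟩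
  -- the least C-index
  have hex0 : ∃ i, i ≤ n ∧ Cv i := by
    obtain ⟨x0, hx0p, hx0c⟩ := hshare
    obtain ⟨i, hfi, hi⟩ := SimpleGraph.Walk.mem_support_iff_exists_getVert.mp hx0p
    exact ⟨i, hi, by rw [hCv]; simpa [hf, hfi]⟩
  set j0 := Nat.find hex0 with hj0def
  obtain ⟨hj0n, hj0Cv⟩ := Nat.find_spec hex0
  have hj0min : ∀ k ≤ n, Cv k → j0 ≤ k := fun k hk hc => Nat.find_min' hex0 ⟨hk, hc⟩
  have hj0RS : j0 ∈ RS := by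
    rw [hRS, Finset.mem_filter, Finset.mem_range]
    refine ⟨by omega, hj0Cv, ?_⟩
    rintro ⟨hpos, hce⟩
    have := (hCeCv hce).1
    have h2 : j0 ≤ j0 - 1 := hj0min _ (by omega) this
    omega
  -- adjacency characterisation for the meet subgraph
  set H := p.toSubgraph ⊓ c.toSubgraph with hH
  have hcadj : ∀ v w : V, c.toSubgraph.Adj v w ↔ s(v, w) ∈ c.edges := by
    intro v w
    rw [SimpleGraph.Walk.toSubgraph_adj_iff]
    constructor
    · rintro ⟨i, he, hi⟩
      rw [← he]; exact getVert_mem_edges c hi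
    · intro he
      obtain ⟨i, hi, he'⟩ := mem_edges_getVert c he
      exact ⟨i, he', hi⟩
  have hHadj : ∀ v w : V, H.Adj v w ↔
      ∃ k, k < n ∧ ((v = f k ∧ w = f (k+1)) ∨ (v = f (k+1) ∧ w = f k)) ∧ Ce k := by
    intro v w
    rw [hH, SimpleGraph.Subgraph.inf_adj, SimpleGraph.Walk.toSubgraph_adj_iff, hcadj]
    constructor
    · rintro ⟨⟨k, he, hk⟩, hce⟩
      refine ⟨k, hk, ?_, ?_⟩
      · rcases Sym2.eq_iff.mp he with ⟨h1, h2⟩ | ⟨h1, h2⟩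
        · exact Or.inl ⟨h1.symm, h2.symm⟩
        · exact Or.inr ⟨h2.symm, h1.symm⟩
      · rw [hCe]; simp only; rw [he]; exact hce
    · rintro ⟨k, hk, hvw, hce⟩
      have he : s(f k, f (k+1)) = s(v, w) := by
        rcases hvw with ⟨h1, h2⟩ | ⟨h1, h2⟩
        · rw [h1, h2]
        · rw [h1, h2]; exact Sym2.eq_swap
      exact ⟨⟨k, he, hk⟩, by rw [← he]; exact hce⟩
  -- run starts
  set rs : ℕ → ℕ := fun i => Nat.findGreatest St i with hrs
  have hrs_le : ∀ i, rs i ≤ i := fun i => Nat.findGreatest_le i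
  have hrs_st : ∀ i, St (rs i) := by
    intro i
    exact Nat.findGreatest_spec (Nat.zero_le i) (by rw [hSt]; simp)
  have hrs_gap : ∀ i k, rs i < k → k ≤ i → 0 < k ∧ Ce (k-1) := by
    intro i k h1 h2
    have := Nat.findGreatest_is_greatest (P := St) h1 h2
    rw [hSt] at this
    simpa using this
  have hrs_Cv : ∀ i, i ≤ n → Cv i → Cv (rs i) := by
    intro i hi hcv
    rcases eq_or_lt_of_le (hrs_le i) with h | h
    · rwa [h]
    · have := hrs_gap i (rs i + 1) (by omega) (by omega)
      have h2 := (hCeCv this.2).1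
      simpa using h2
  have hrs_self : ∀ j, St j → rs j = j := by
    intro j hj
    exact le_antisymm (hrs_le j) (Nat.le_findGreatest le_rfl hj)
  have hrs_succ : ∀ k, Ce k → rs (k+1) = rs k := by
    intro k hk
    rw [hrs]
    simp only
    rw [Nat.findGreatest_succ]
    have : ¬ St (k+1) := by
      rw [hSt]
      exact not_not_intro ⟨k.succ_pos, by simpa using hk⟩
    simp [this]
  -- counting components
  have hverts : ∀ v : V, v ∈ H.verts ↔ v ∈ p.support ∧ v ∈ c.support := by
    intro v
    rw [hH]
    rw [SimpleGraph.Subgraph.verts_inf]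
    simp [SimpleGraph.Walk.mem_verts_toSubgraph]
  have hcard_comp : Nat.card (H.coe.ConnectedComponent) = RS.card := by
    have hexidx : ∀ v : H.verts, ∃ i, f i = (v : V) ∧ i ≤ n := by
      intro v
      have hv := ((hverts v).mp v.2).1
      rw [SimpleGraph.Walk.mem_support_iff_exists_getVert] at hv
      exact hv
    set idx : H.verts → ℕ := fun v => Nat.find (hexidx v) with hidx
    have hidx_spec : ∀ v, f (idx v) = (v : V) ∧ idx v ≤ n := fun v => Nat.find_spec (hexidx v)
    have hidx_unique : ∀ (v : H.verts) (i : ℕ), i ≤ n → f i = (v : V) → idx v = i := by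
      intro v i hi hfi
      exact hfinj (hidx_spec v).2 hi ((hidx_spec v).1.trans hfi.symm)
    have hidx_Cv : ∀ v : H.verts, Cv (idx v) := by
      intro v
      rw [hCv]; simp only
      rw [(hidx_spec v).1]
      exact ((hverts v).mp v.2).2
    have hconst : ∀ v w : H.verts, H.coe.Adj v w → rs (idx v) = rs (idx w) := by
      intro v w hvw
      rw [SimpleGraph.Subgraph.coe_adj] at hvw
      obtain ⟨k, hk, hor, hce⟩ := (hHadj _ _).mp hvw
      rcases hor with ⟨h1, h2⟩ | ⟨h1, h2⟩
      · rw [hidx_unique v k (by omega) h1.symm, hidx_unique w (k+1) (by omega) h2.symm,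
          hrs_succ k hce]
      · rw [hidx_unique v (k+1) (by omega) h1.symm, hidx_unique w k (by omega) h2.symm,
          hrs_succ k hce]
    have hwalkconst : ∀ (v w : H.verts) (q : H.coe.Walk v w), rs (idx v) = rs (idx w) := by
      intro v w q
      induction q with
      | nil => rfl
      | cons hadj q ih => exact (hconst _ _ hadj).trans ih
    have wd : ∀ (v w : H.verts) (q : H.coe.Walk v w), q.IsPath → rs (idx v) = rs (idx w) :=
      fun v w q _ => hwalkconst v w q
    set comp : H.coe.ConnectedComponent → ℕ :=
      SimpleGraph.ConnectedComponent.lift (fun v => rs (idx v)) wd with hcompdef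
    have hreach : ∀ i, i ≤ n → Cv i → ∀ (h1 : f i ∈ H.verts) (h2 : f (rs i) ∈ H.verts),
        H.coe.Reachable ⟨f i, h1⟩ ⟨f (rs i), h2⟩ := by
      intro i
      induction i using Nat.strong_induction_on with
      | _ i ih =>
        intro hi hcv h1 h2
        rcases eq_or_lt_of_le (hrs_le i) with h | h
        · have heq : (⟨f (rs i), h2⟩ : H.verts) = ⟨f i, h1⟩ :=
            Subtype.ext (show f (rs i) = f i by rw [h])
          rw [heq]
        · obtain ⟨hpos, hce⟩ := hrs_gap i i h (le_refl i)
          have hmem : f (i-1) ∈ H.verts := by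
            rw [hverts]; exact ⟨hmemf _ (le_trans (Nat.sub_le i 1) hi), (hCeCv hce).1⟩
          have hadj : H.coe.Adj ⟨f i, h1⟩ ⟨f (i-1), hmem⟩ := by
            rw [SimpleGraph.Subgraph.coe_adj, hHadj]
            refine ⟨i-1, lt_of_lt_of_le (by omega) hi, Or.inr ⟨?_, rfl⟩, hce⟩
            show f i = f (i - 1 + 1)
            congr 1
            omega
          have hrseq : rs (i-1) = rs i := by
            have h' := hrs_succ (i-1) hce
            rw [show i - 1 + 1 = i from by omega] at h'
            exact h'.symm
          have h2' : f (rs (i-1)) ∈ H.verts := by rw [hrseq]; exact h2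
          have hmid := ih (i-1) (by omega) (by omega) ((hCeCv hce).1) hmem h2'
          have heq : (⟨f (rs (i-1)), h2'⟩ : H.verts) = ⟨f (rs i), h2⟩ :=
            Subtype.ext (show f (rs (i-1)) = f (rs i) by rw [hrseq])
          rw [← heq]
          exact hadj.reachable.trans hmid
    have hcomp_mem : ∀ K : H.coe.ConnectedComponent, comp K ∈ RS := by
      intro K
      induction K using SimpleGraph.ConnectedComponent.ind with
      | _ v =>
        have h1 : comp (H.coe.connectedComponentMk v) = rs (idx v) := rfl
        rw [h1, hRS, Finset.mem_filter, Finset.mem_range]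
        have hin : idx v ≤ n := (hidx_spec v).2
        exact ⟨by have := hrs_le (idx v); omega, hrs_Cv _ hin (hidx_Cv v), hrs_st _⟩
    have hbij : Function.Bijective
        (fun K : H.coe.ConnectedComponent => (⟨comp K, hcomp_mem K⟩ : {j // j ∈ RS})) := by
      constructor
      · intro K K' hKK'
        simp only [Subtype.mk.injEq] at hKK'
        revert hKK'
        refine SimpleGraph.ConnectedComponent.ind₂ ?_ K K'
        intro v w hvw
        have hvw' : rs (idx v) = rs (idx w) := hvw
        have hrv : f (rs (idx v)) ∈ H.verts := by
          rw [hverts]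
          exact ⟨hmemf _ (le_trans (hrs_le _) (hidx_spec v).2),
            hrs_Cv _ (hidx_spec v).2 (hidx_Cv v)⟩
        have hrw : f (rs (idx w)) ∈ H.verts := by
          rw [hverts]
          exact ⟨hmemf _ (le_trans (hrs_le _) (hidx_spec w).2),
            hrs_Cv _ (hidx_spec w).2 (hidx_Cv w)⟩
        have hv1 : f (idx v) ∈ H.verts := by rw [(hidx_spec v).1]; exact v.2
        have hw1 : f (idx w) ∈ H.verts := by rw [(hidx_spec w).1]; exact w.2
        have r1 := hreach (idx v) (hidx_spec v).2 (hidx_Cv v) hv1 hrv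
        have r2 := hreach (idx w) (hidx_spec w).2 (hidx_Cv w) hw1 hrw
        have hveq : (⟨f (idx v), hv1⟩ : H.verts) = v := Subtype.ext (hidx_spec v).1
        have hweq : (⟨f (idx w), hw1⟩ : H.verts) = w := Subtype.ext (hidx_spec w).1
        have hmideq : (⟨f (rs (idx v)), hrv⟩ : H.verts) = ⟨f (rs (idx w)), hrw⟩ :=
          Subtype.ext (show f (rs (idx v)) = f (rs (idx w)) by rw [hvw'])
        apply SimpleGraph.ConnectedComponent.sound
        rw [← hveq, ← hweq]
        exact (r1.trans (hmideq ▸ r2.symm))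
      · rintro ⟨j, hj⟩
        have hj' := hj
        rw [hRS, Finset.mem_filter, Finset.mem_range] at hj'
        obtain ⟨hjn, hcvj, hstj⟩ := hj'
        have hjv : f j ∈ H.verts := by rw [hverts]; exact ⟨hmemf j (by omega), hcvj⟩
        refine ⟨H.coe.connectedComponentMk ⟨f j, hjv⟩, ?_⟩
        refine Subtype.ext ?_
        show comp (H.coe.connectedComponentMk ⟨f j, hjv⟩) = j
        rw [show comp (H.coe.connectedComponentMk ⟨f j, hjv⟩) = rs (idx ⟨f j, hjv⟩) from rfl,
          hidx_unique ⟨f j, hjv⟩ j (by omega) rfl, hrs_self j hstj]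
    rw [Nat.card_eq_of_bijective _ hbij, Nat.card_eq_finsetCard]
  -- the chord set
  set prevC : ℕ → ℕ := fun j => Nat.findGreatest Cv (j-1) with hprevC
  set csup : ℕ → List V := fun j => (p.support.drop (prevC j)).take (j - prevC j + 1)
    with hcsup
  have herase_facts : ∀ {k : ℕ}, k ∈ RS.erase j0 → k ≤ n ∧ Cv k ∧ St k ∧ 0 < k ∧ j0 ≤ k - 1 := by
    intro k hk
    have hk1 := Finset.mem_of_mem_erase hk
    have hne := Finset.ne_of_mem_erase hk
    rw [hRS, Finset.mem_filter, Finset.mem_range] at hk1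
    obtain ⟨hklt, hkcv, hkst⟩ := hk1
    have hle : j0 ≤ k := hj0min k (by omega) hkcv
    have hlt : j0 < k := lt_of_le_of_ne hle (Ne.symm hne)
    exact ⟨by omega, hkcv, hkst, by omega, by omega⟩
  have hprevC_le : ∀ k : ℕ, prevC k ≤ k - 1 := fun k => Nat.findGreatest_le _
  have hcsup_len : ∀ {k : ℕ}, k ∈ RS.erase j0 → (csup k).length = k - prevC k + 1 := by
    intro k hk
    obtain ⟨hkn, -, -, hkpos, -⟩ := herase_facts hk
    have h1 := hprevC_le k
    rw [hcsup]
    simp only [List.length_take, List.length_drop, hsuplen]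
    omega
  have hcsup_get : ∀ {k : ℕ} (hk : k ∈ RS.erase j0)
      (h : k - prevC k < (csup k).length), (csup k)[k - prevC k] = f k := by
    intro k hk h
    obtain ⟨hkn, -, -, hkpos, -⟩ := herase_facts hk
    have h1 := hprevC_le k
    simp only [hcsup] at h ⊢
    rw [List.getElem_take, List.getElem_drop, support_getElem]
    congr 1
    omega
  have hset : {r : List V |
        ∃ (x y : V) (R : G.Walk x y), R.IsPath ∧ 0 < R.length ∧
          R.support.IsInfix p.support ∧
          x ∈ c.support ∧ y ∈ c.support ∧
          (∀ v ∈ R.support, v ≠ x → v ≠ y → v ∉ c.support) ∧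
          (∀ e ∈ R.edges, e ∉ c.edges) ∧
          r = R.support} = ↑((RS.erase j0).image csup) := by
    ext r
    simp only [Set.mem_setOf_eq, Finset.coe_image, Set.mem_image, Finset.mem_coe]
    constructor
    · rintro ⟨x, y, R, hRpath, hRlen, hRinf, hxc, hyc, hint, hedg, rfl⟩
      obtain ⟨l₁, l₂, hdecomp⟩ := hRinf
      set i := l₁.length with hidef
      set m := R.length with hmdef
      have hRsuplen : R.support.length = m + 1 := SimpleGraph.Walk.length_support R
      have hlen : i + (m + 1) + l₂.length = n + 1 := by
        have hl := congrArg List.length hdecomp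
        simp only [List.length_append, hRsuplen, hsuplen] at hl
        omega
      have him : i + m ≤ n := by omega
      have hkey : ∀ k, k ≤ m → f (i + k) = R.getVert k := by
        intro k hk
        have hik : i + k < p.support.length := by omega
        have h1 : R.support[k]'(by omega) = p.support[i + k]'hik := by
          rw [List.getElem_append_right' l₁, List.getElem_append_left' (by simp only [List.length_append]; omega) l₂]
          simp_rw [hdecomp]
          congr 1
          omega
        have h2 := support_getElem R k (by omega)
        have h3 := support_getElem p (i+k) hik
        rw [h2] at h1
        rw [h3] at h1
        exact h1.symm
      have hx : x = f i := by
        have h0 := hkey 0 (Nat.zero_le m)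
        rw [SimpleGraph.Walk.getVert_zero] at h0
        exact h0.symm
      have hy : y = f (i + m) := by
        have h0 := hkey m le_rfl
        have h1 : R.getVert m = y := SimpleGraph.Walk.getVert_length R
        rw [h1] at h0
        exact h0.symm
      have hCvi : Cv i := by rw [hCv]; simp only; rw [← hx]; exact hxc
      have hCvj : Cv (i + m) := by rw [hCv]; simp only; rw [← hy]; exact hyc
      have hintCv : ∀ k, 0 < k → k < m → ¬ Cv (i + k) := by
        intro k h1 h2 hcv
        have hvmem : R.getVert k ∈ R.support :=
          SimpleGraph.Walk.mem_support_iff_exists_getVert.mpr ⟨k, rfl, by omega⟩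
        have hnx : R.getVert k ≠ x := by
          intro heq
          have he1 : f (i + k) = f i := by rw [hkey k (le_of_lt h2), heq, hx]
          have := hfinj (by omega) (by omega) he1
          omega
        have hny : R.getVert k ≠ y := by
          intro heq
          have he1 : f (i + k) = f (i + m) := by rw [hkey k (le_of_lt h2), heq, hy]
          have := hfinj (by omega) (by omega) he1
          omega
        exact hint _ hvmem hnx hny (by rw [← hkey k (le_of_lt h2)]; exact hcv)
      have hStj : St (i + m) := by
        rw [hSt]
        rintro ⟨hpos, hce⟩
        rcases Nat.lt_or_ge 1 m with hm2 | hm1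
        · have hcv1 := (hCeCv hce).1
          have h2 := hintCv (m-1) (by omega) (by omega)
          rw [show i + (m-1) = i + m - 1 from by omega] at h2
          exact h2 hcv1
        · have hm : m = 1 := by omega
          have hedge : s(R.getVert 0, R.getVert 1) ∈ R.edges :=
            getVert_mem_edges R (by omega)
          apply hedg _ hedge
          have h0 : R.getVert 0 = f i := (hkey 0 (by omega)).symm
          have h1' : R.getVert 1 = f (i+1) := (hkey 1 (by omega)).symm
          rw [h0, h1']
          rw [hCe] at hce
          rw [show i + m - 1 = i from by omega] at hce
          exact hce
      have hjmem : i + m ∈ RS.erase j0 := by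
        rw [Finset.mem_erase, hRS, Finset.mem_filter, Finset.mem_range]
        refine ⟨?_, by omega, hCvj, hStj⟩
        have hle := hj0min i (by omega) hCvi
        omega
      have hprev : prevC (i + m) = i := by
        have hle1 : i ≤ prevC (i + m) := Nat.le_findGreatest (by omega) hCvi
        have hle2 : prevC (i + m) ≤ i + m - 1 := hprevC_le _
        by_contra hne
        have hlt : i < prevC (i+m) := by omega
        have hcvp : Cv (prevC (i+m)) :=
          Nat.findGreatest_spec (show i ≤ i+m-1 by omega) hCvi
        have h2 := hintCv (prevC (i+m) - i) (by omega) (by omega)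
        rw [show i + (prevC (i+m) - i) = prevC (i+m) from by omega] at h2
        exact h2 hcvp
      refine ⟨i + m, hjmem, ?_⟩
      have hlencsup : (csup (i+m)).length = m + 1 := by
        rw [hcsup_len hjmem, hprev]
        omega
      apply List.ext_getElem
      · rw [hlencsup, hRsuplen]
      · intro k hk1 hk2
        have e1 : (csup (i+m))[k]'hk1 = f (i + k) := by
          simp only [hcsup]
          rw [List.getElem_take, List.getElem_drop, support_getElem, hprev]
        have e2 : R.support[k]'hk2 = f (i + k) := by
          rw [support_getElem R k hk2, ← hkey k (by omega)]
        rw [e1, e2]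
    · rintro ⟨j, hjmem, rfl⟩
      obtain ⟨hjn, hCvj, hStj, hjpos, hj0le⟩ := herase_facts hjmem
      set i := prevC j with hidef
      have hiCv : Cv i := Nat.findGreatest_spec hj0le hj0Cv
      have hile : i ≤ j - 1 := hprevC_le j
      have hgap : ∀ k, i < k → k ≤ j - 1 → ¬ Cv k := fun k h1 h2 =>
        Nat.findGreatest_is_greatest h1 h2
      have hyeq : (p.drop i).getVert (j - i) = f j := by
        rw [getVert_drop]
        show p.getVert (i + (j - i)) = p.getVert j
        congr 1
        omega
      set R : G.Walk (p.getVert i) (f j) := (wtake (p.drop i) (j - i)).copy rfl hyeq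
        with hRdef
      have hRsup : R.support = csup j := by
        rw [hRdef, SimpleGraph.Walk.support_copy, support_wtake,
          support_drop p i (by omega : i ≤ p.length)]
      have hRlen : R.length = j - i := by
        rw [hRdef, SimpleGraph.Walk.length_copy, length_wtake, length_drop']
        omega
      have hedgeslen : p.edges.length = n := SimpleGraph.Walk.length_edges p
      have hRedges : R.edges = (p.edges.drop i).take (j - i) := by
        rw [hRdef, SimpleGraph.Walk.edges_copy, edges_wtake,
          edges_drop p i (by omega : i ≤ p.length)]
      have hsupelem : ∀ v ∈ R.support, ∃ k ≤ j - i, v = f (i + k) := by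
        intro v hv
        rw [hRsup] at hv
        obtain ⟨k, hk, hvk⟩ := List.getElem_of_mem hv
        have hklen : k ≤ j - i := by
          have := hcsup_len hjmem
          omega
        refine ⟨k, hklen, ?_⟩
        rw [← hvk]
        simp only [hcsup]
        rw [List.getElem_take, List.getElem_drop, support_getElem]
      refine ⟨p.getVert i, f j, R, ?_, ?_, ?_, hiCv, hCvj, ?_, ?_, hRsup.symm⟩
      · rw [SimpleGraph.Walk.isPath_def, hRsup]
        have hsub : (csup j).Sublist p.support := by
          simp only [hcsup]
          exact (List.take_sublist _ _).trans (List.drop_sublist _ _)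
        exact hp.support_nodup.sublist hsub
      · rw [hRlen]; omega
      · rw [hRsup]
        simp only [hcsup]
        exact List.IsInfix.trans ((List.take_prefix _ _).isInfix)
          ((List.drop_suffix _ _).isInfix)
      · intro v hv hvx hvy
        obtain ⟨k, hk, rfl⟩ := hsupelem v hv
        have hk0 : k ≠ 0 := by
          rintro rfl
          exact hvx rfl
        have hkj : i + k ≠ j := by
          intro heq
          apply hvy
          rw [← heq]
        exact hgap (i+k) (by omega) (by omega)
      · intro e he hec
        rw [hRedges] at he
        obtain ⟨k, hk, hek⟩ := List.getElem_of_mem he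
        have hklen : k < j - i := by
          have hlen2 : ((p.edges.drop i).take (j-i)).length = j - i := by
            simp only [List.length_take, List.length_drop, hedgeslen]
            omega
          omega
        have hee : e = s(f (i+k), f (i+k+1)) := by
          rw [← hek, List.getElem_take, List.getElem_drop, edges_getElem]
        have hce : Ce (i+k) := by
          rw [hCe]
          simp only
          rw [← hee]
          exact hec
        have hcv2 := hCeCv hce
        rcases Nat.eq_zero_or_pos k with hk0 | hk0
        · subst hk0
          rcases Nat.lt_or_ge (i+1) j with hlt | hge
          · exact hgap (i+1) (by omega) (by omega) (by simpa using hcv2.2)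
          · rw [hSt] at hStj
            apply hStj
            refine ⟨by omega, ?_⟩
            rw [show j - 1 = i from by omega]
            simpa using hce
        · exact hgap (i+k) (by omega) (by omega) hcv2.1
  have hinj : Set.InjOn csup ↑(RS.erase j0) := by
    intro j hj j' hj' heq
    rw [Finset.mem_coe] at hj hj'
    obtain ⟨hjn, -, -, hjpos, -⟩ := herase_facts hj
    obtain ⟨hjn', -, -, hjpos', -⟩ := herase_facts hj'
    have hlen : (csup j).length = (csup j').length := by rw [heq]
    have hmm : j - prevC j = j' - prevC j' := by
      have e1 := hcsup_len hj
      have e2 := hcsup_len hj'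
      omega
    have hlt1 : j - prevC j < (csup j).length := by rw [hcsup_len hj]; omega
    have hlt2 : j' - prevC j' < (csup j').length := by rw [hcsup_len hj']; omega
    have : f j = f j' := by
      rw [← hcsup_get hj hlt1, ← hcsup_get hj' hlt2]
      simp_rw [← hmm]
      congr 1
    exact hfinj hjn hjn' this
  rw [hset, Set.ncard_coe_finset, Finset.card_image_of_injOn hinj,
    Finset.card_erase_of_mem hj0RS, hcard_comp]
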